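/- For 0 < τ < 1, a nonzero n×n symmetric positive semidefinite matrix P, and 0 < θ < ((1−τ)‖P‖)⁻¹, the quantity γ_τ(P, θ) = tr(−(1/(τ(1−τ)))(I − θ(1−τ)P)^{τ/(τ−1)} + (1/(1−τ))(I − θ(1−τ)P)^{1/(τ−1)} + (1/τ)I) is strictly positive. -/

import Mathlib

open Matrix
open scoped Matrix.Norms.L2Operator

variable {n : ℕ}

/-- largest singular value = spectral (ℓ²-operator) norm -/
noncomputable def sigma1 {m k : ℕ} (M : Matrix (Fin m) (Fin k) ℝ) : ℝ := ‖M‖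

/-- Thompson part metric -/
noncomputable def dT (P Q : Matrix (Fin n) (Fin n) ℝ) : ℝ :=
  max (Real.log (sigma1 (P⁻¹ * Q))) (Real.log (sigma1 (Q⁻¹ * P)))

/-- spectral function of a matrix: apply `f` to eigenvalues (0 if not Hermitian) -/
noncomputable def matFun (f : ℝ → ℝ) (A : Matrix (Fin n) (Fin n) ℝ) :
    Matrix (Fin n) (Fin n) ℝ :=
  if hA : A.IsHermitian then
    (hA.eigenvectorUnitary : Matrix (Fin n) (Fin n) ℝ) *
      diagonal (fun i => f (hA.eigenvalues i)) *
      star (hA.eigenvectorUnitary : Matrix (Fin n) (Fin n) ℝ)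
  else 0

noncomputable def matRpow (A : Matrix (Fin n) (Fin n) ℝ) (r : ℝ) : Matrix (Fin n) (Fin n) ℝ :=
  matFun (fun x => x ^ r) A

noncomputable def matExp (A : Matrix (Fin n) (Fin n) ℝ) : Matrix (Fin n) (Fin n) ℝ :=
  matFun Real.exp A


noncomputable def gammaTau {n : ℕ} (τ θ : ℝ) (P : Matrix (Fin n) (Fin n) ℝ) : ℝ :=
  ((-(1/(τ*(1-τ)))) • matRpow (1 - (θ*(1-τ)) • P) (τ/(τ-1))
    + (1/(1-τ)) • matRpow (1 - (θ*(1-τ)) • P) (1/(τ-1))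
    + (1/τ) • (1 : Matrix (Fin n) (Fin n) ℝ)).trace

/-! ### Auxiliary lemmas -/

lemma scalar_key {τ : ℝ} (hτ0 : 0 < τ) (hτ1 : τ < 1) {μ : ℝ} (hμ0 : 0 < μ) (hμ1 : μ ≤ 1) :
    0 ≤ -(1/(τ*(1-τ))) * μ ^ (τ/(τ-1)) + (1/(1-τ)) * μ ^ (1/(τ-1)) + 1/τ ∧
      (μ < 1 → 0 < -(1/(τ*(1-τ))) * μ ^ (τ/(τ-1)) + (1/(1-τ)) * μ ^ (1/(τ-1)) + 1/τ) := by
  have h1τ : 0 < 1 - τ := by linarith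
  set x : ℝ := μ ^ (1/(τ-1)) with hxdef
  have hb : 1/(τ-1) < 0 := by
    apply div_neg_of_pos_of_neg one_pos; linarith
  have hx1 : 1 ≤ x := Real.one_le_rpow_of_pos_of_le_one_of_nonpos hμ0 hμ1 hb.le
  have heq : μ ^ (τ/(τ-1)) = x ^ τ := by
    rw [hxdef, ← Real.rpow_mul hμ0.le]
    congr 1; ring
  have key : ∀ y : ℝ, -(1/(τ*(1-τ))) * y + (1/(1-τ)) * x + 1/τ
      = (1/(τ*(1-τ))) * (τ*x + (1-τ) - y) := by
    intro y; field_simp; ring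
  have hbern : x ^ τ ≤ 1 + τ * (x - 1) := by
    have := rpow_one_add_le_one_add_mul_self (s := x - 1) (by linarith) hτ0.le hτ1.le
    simpa using this
  constructor
  · rw [heq, key]
    apply mul_nonneg (by positivity)
    linarith
  · intro hμlt
    have hx1' : 1 < x := Real.one_lt_rpow_iff_of_pos hμ0 |>.mpr (Or.inr ⟨hμlt, hb⟩)
    have hbern' : x ^ τ < 1 + τ * (x - 1) := by
      have := rpow_one_add_lt_one_add_mul_self (s := x - 1) (by linarith) (by linarith) hτ0 hτ1
      simpa using this
    rw [heq, key]
    apply mul_pos (by positivity)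
    linarith

lemma matFun_trace {n : ℕ} (f : ℝ → ℝ) {A : Matrix (Fin n) (Fin n) ℝ} (hA : A.IsHermitian) :
    (matFun f A).trace = ∑ i, f (hA.eigenvalues i) := by
  have hU : star (hA.eigenvectorUnitary : Matrix (Fin n) (Fin n) ℝ) *
      (hA.eigenvectorUnitary : Matrix (Fin n) (Fin n) ℝ) = 1 := by
    simpa using unitary.coe_star_mul_self hA.eigenvectorUnitary
  rw [matFun, dif_pos hA, Matrix.trace_mul_cycle, hU, Matrix.one_mul, Matrix.trace_diagonal]

lemma eig_formula {n : ℕ} (c : ℝ) (P : Matrix (Fin n) (Fin n) ℝ)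
    (hA : (1 - c • P).IsHermitian) (i : Fin n) :
    hA.eigenvalues i
      = 1 - c * (star ⇑(hA.eigenvectorBasis i) ⬝ᵥ (P *ᵥ ⇑(hA.eigenvectorBasis i))) := by
  have hnorm : ‖hA.eigenvectorBasis i‖ = 1 := hA.eigenvectorBasis.orthonormal.1 i
  have hvv : star ⇑(hA.eigenvectorBasis i) ⬝ᵥ ⇑(hA.eigenvectorBasis i) = 1 := by
    have h := EuclideanSpace.inner_eq_star_dotProduct (hA.eigenvectorBasis i)
      (hA.eigenvectorBasis i)
    rw [real_inner_self_eq_norm_sq, hnorm] at h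
    simpa using h.symm
  have h := hA.eigenvalues_eq i
  simp only [RCLike.re_to_real] at h
  rw [h, sub_mulVec, one_mulVec, smul_mulVec, dotProduct_sub, dotProduct_smul, hvv]
  simp

lemma quad_le_norm {n : ℕ} (P : Matrix (Fin n) (Fin n) ℝ) (v : EuclideanSpace ℝ (Fin n))
    (hv : ‖v‖ = 1) : star (⇑v) ⬝ᵥ (P *ᵥ ⇑v) ≤ ‖P‖ := by
  set y : EuclideanSpace ℝ (Fin n) := (EuclideanSpace.equiv (Fin n) ℝ).symm (P *ᵥ ⇑v) with hy
  have h1 : star (⇑v) ⬝ᵥ (P *ᵥ ⇑v) = (inner ℝ v y : ℝ) := by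
    rw [EuclideanSpace.inner_eq_star_dotProduct, dotProduct_comm]
    rfl
  have h2 : (inner ℝ v y : ℝ) ≤ ‖v‖ * ‖y‖ := real_inner_le_norm v y
  have h3 : ‖y‖ ≤ ‖P‖ * ‖v‖ := P.l2_opNorm_mulVec v
  rw [h1]
  calc (inner ℝ v y : ℝ) ≤ ‖v‖ * ‖y‖ := h2
    _ = ‖y‖ := by rw [hv, one_mul]
    _ ≤ ‖P‖ * ‖v‖ := h3
    _ = ‖P‖ := by rw [hv, mul_one]

theorem gammaTau_pos {n : ℕ} (τ θ : ℝ)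
    (hτ0 : 0 < τ) (hτ1 : τ < 1)
    (P : Matrix (Fin n) (Fin n) ℝ)
    (hP : P.PosSemidef) (hP0 : P ≠ 0)
    (hθ0 : 0 < θ) (hθ : θ < ((1 - τ) * sigma1 P)⁻¹) :
    0 < gammaTau τ θ P := by
  have h1τ : 0 < 1 - τ := by linarith
  have hσ : sigma1 P = ‖P‖ := rfl
  rw [hσ] at hθ
  set c : ℝ := θ * (1 - τ) with hc
  have hc0 : 0 < c := mul_pos hθ0 h1τ
  have hPn : 0 < ‖P‖ := norm_pos_iff.mpr hP0
  have hd : 0 < (1 - τ) * ‖P‖ := mul_pos h1τ hPn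
  have hcP : c * ‖P‖ < 1 := by
    have h := mul_lt_mul_of_pos_right hθ hd
    rw [inv_mul_cancel₀ hd.ne'] at h
    calc c * ‖P‖ = θ * ((1 - τ) * ‖P‖) := by ring
      _ < 1 := h
  set A : Matrix (Fin n) (Fin n) ℝ := 1 - c • P with hAdef
  have hA : A.IsHermitian := by
    simp only [hAdef, Matrix.IsHermitian, Matrix.conjTranspose_sub, Matrix.conjTranspose_smul,
      Matrix.conjTranspose_one, hP.1.eq]
    simp
  -- eigenvalue bounds
  have hqf : ∀ i, hA.eigenvalues i
      = 1 - c * (star ⇑(hA.eigenvectorBasis i) ⬝ᵥ (P *ᵥ ⇑(hA.eigenvectorBasis i))) :=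
    fun i => eig_formula c P hA i
  have hpos : ∀ i, 0 < hA.eigenvalues i := by
    intro i
    have hq := hP.dotProduct_mulVec_nonneg ⇑(hA.eigenvectorBasis i)
    have hqn := quad_le_norm P (hA.eigenvectorBasis i) (hA.eigenvectorBasis.orthonormal.1 i)
    rw [hqf i]
    nlinarith
  have hle1 : ∀ i, hA.eigenvalues i ≤ 1 := by
    intro i
    have hq := hP.dotProduct_mulVec_nonneg ⇑(hA.eigenvectorBasis i)
    rw [hqf i]
    nlinarith
  -- some eigenvalue is < 1
  have hexists : ∃ i, hA.eigenvalues i < 1 := by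
    by_contra hcon
    push_neg at hcon
    have hall : ∀ i, hA.eigenvalues i = 1 := fun i => le_antisymm (hle1 i) (hcon i)
    have hdiag : diagonal (RCLike.ofReal ∘ hA.eigenvalues) = (1 : Matrix (Fin n) (Fin n) ℝ) := by
      have hfun : (RCLike.ofReal ∘ hA.eigenvalues : Fin n → ℝ) = fun _ => 1 := by
        funext i; simp [hall i]
      rw [hfun, Matrix.diagonal_one]
    have hA1 : A = 1 := by
      have hspec := hA.spectral_theorem
      rw [hdiag, map_one] at hspec
      have hU : (hA.eigenvectorUnitary : Matrix (Fin n) (Fin n) ℝ) *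
          star (hA.eigenvectorUnitary : Matrix (Fin n) (Fin n) ℝ) = 1 := by
        simpa using unitary.coe_mul_star_self hA.eigenvectorUnitary
      exact hspec
    have : c • P = 0 := by
      have : (1 : Matrix (Fin n) (Fin n) ℝ) - c • P = 1 := hA1
      linear_combination (norm := module) -this
    exact hP0 (by simpa [hc0.ne'] using this)
  -- trace computation
  have htrace : gammaTau τ θ P
      = ∑ i, (-(1/(τ*(1-τ))) * (hA.eigenvalues i) ^ (τ/(τ-1))
          + (1/(1-τ)) * (hA.eigenvalues i) ^ (1/(τ-1)) + 1/τ) := by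
    rw [gammaTau, Matrix.trace_add, Matrix.trace_add, Matrix.trace_smul, Matrix.trace_smul,
      Matrix.trace_smul, Matrix.trace_one]
    rw [matRpow, matRpow]
    rw [matFun_trace _ hA, matFun_trace _ hA]
    rw [Finset.sum_add_distrib, Finset.sum_add_distrib, ← Finset.mul_sum, ← Finset.mul_sum,
      Finset.sum_const, Finset.card_univ]
    simp only [smul_eq_mul, nsmul_eq_mul, Fintype.card_fin]
    push_cast
    ring
  rw [htrace]
  obtain ⟨j, hj⟩ := hexists
  apply Finset.sum_pos'
  · intro i _
    exact (scalar_key hτ0 hτ1 (hpos i) (hle1 i)).1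
  · exact ⟨j, Finset.mem_univ j, (scalar_key hτ0 hτ1 (hpos j) (hle1 j)).2 hj⟩
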